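/- The functions I₁(t,x,y,u) = (t-t₀)² exp((x-x₀)²/(4(t-t₀))) u and I₂(t,x,y) = ((t-t₀)(x+x₀) - 2(y-y₀))/(t-t₀)^{3/2} are invariants of the vector fields Y₁ and Y₄: both Y₁I₁ = 0, Y₄I₁ = 0, Y₁I₂ = 0, Y₄I₂ = 0 hold on the region t > t₀. -/

import Mathlib

open Real

/-- I₁ = (t-t₀)² exp((x-x₀)²/(4(t-t₀))) u and I₂ = ((t-t₀)(x+x₀)-2(y-y₀))/(t-t₀)^{3/2}
are annihilated by the vector fields
Y₁ = 2(t-t₀)∂_t + (x-x₀)∂_x - (x₀(t-t₀)-3(y-y₀))∂_y - 4u∂_u and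
Y₄ = 2(t-t₀)∂_x + (t-t₀)²∂_y - (x-x₀)u∂_u on the region t > t₀. -/
theorem stmt12 (t₀ x₀ y₀ : ℝ) :
    let I₁ : ℝ → ℝ → ℝ → ℝ → ℝ := fun t x y u =>
      (t - t₀) ^ 2 * Real.exp ((x - x₀) ^ 2 / (4 * (t - t₀))) * u
    let I₂ : ℝ → ℝ → ℝ → ℝ → ℝ := fun t x y _u =>
      ((t - t₀) * (x + x₀) - 2 * (y - y₀)) / (t - t₀) ^ ((3 : ℝ) / 2)
    let Y₁ : (ℝ → ℝ → ℝ → ℝ → ℝ) → ℝ → ℝ → ℝ → ℝ → ℝ := fun I t x y u =>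
      2 * (t - t₀) * deriv (fun s => I s x y u) t
        + (x - x₀) * deriv (fun s => I t s y u) x
        - (x₀ * (t - t₀) - 3 * (y - y₀)) * deriv (fun s => I t x s u) y
        - 4 * u * deriv (fun s => I t x y s) u
    let Y₄ : (ℝ → ℝ → ℝ → ℝ → ℝ) → ℝ → ℝ → ℝ → ℝ → ℝ := fun I t x y u =>
      2 * (t - t₀) * deriv (fun s => I t s y u) x
        + (t - t₀) ^ 2 * deriv (fun s => I t x s u) y
        - (x - x₀) * u * deriv (fun s => I t x y s) u
    ∀ t x y u : ℝ, t₀ < t →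
      Y₁ I₁ t x y u = 0 ∧ Y₄ I₁ t x y u = 0 ∧ Y₁ I₂ t x y u = 0 ∧ Y₄ I₂ t x y u = 0 := by
  intro I₁ I₂ Y₁ Y₄ t x y u ht
  have hτ : (0:ℝ) < t - t₀ := by linarith
  have hτ0 : t - t₀ ≠ 0 := ne_of_gt hτ
  have h4τ0 : 4 * (t - t₀) ≠ 0 := by positivity
  have hid : HasDerivAt (fun s : ℝ => s - t₀) 1 t := (hasDerivAt_id t).sub_const t₀
  set E : ℝ := Real.exp ((x - x₀) ^ 2 / (4 * (t - t₀))) with hE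
  -- derivatives of I₁
  have hDt1 : HasDerivAt (fun s => I₁ s x y u)
      ((2 * (t - t₀) * E
        + (t - t₀) ^ 2 * (E * ((0 * (4 * (t - t₀)) - (x - x₀) ^ 2 * 4)
          / (4 * (t - t₀)) ^ 2))) * u) t := by
    have h2 : HasDerivAt (fun s : ℝ => (s - t₀) ^ 2) (2 * (t - t₀)) t := by
      simpa using hid.fun_pow 2
    have h3 : HasDerivAt (fun s : ℝ => 4 * (s - t₀)) 4 t := by
      simpa using hid.const_mul 4
    have h4 : HasDerivAt (fun s : ℝ => (x - x₀) ^ 2 / (4 * (s - t₀)))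
        ((0 * (4 * (t - t₀)) - (x - x₀) ^ 2 * 4) / (4 * (t - t₀)) ^ 2) t :=
      (hasDerivAt_const t ((x - x₀) ^ 2)).div h3 h4τ0
    exact (h2.mul h4.exp).mul_const u
  have hDx1 : HasDerivAt (fun s => I₁ t s y u)
      ((t - t₀) ^ 2 * (E * (2 * (x - x₀) / (4 * (t - t₀)))) * u) x := by
    have h1 : HasDerivAt (fun s : ℝ => (s - x₀) ^ 2 / (4 * (t - t₀)))
        (2 * (x - x₀) / (4 * (t - t₀))) x := by
      have := (((hasDerivAt_id x).sub_const x₀).pow 2).div_const (4 * (t - t₀))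
      simpa using this
    exact (h1.exp.const_mul ((t - t₀) ^ 2)).mul_const u
  have hDy1 : deriv (fun s => I₁ t x s u) y = 0 := by
    simp [I₁]
  have hDu1 : HasDerivAt (fun s => I₁ t x y s) ((t - t₀) ^ 2 * E) u := by
    simpa using (hasDerivAt_id u).const_mul ((t - t₀) ^ 2 * E)
  -- derivatives of I₂
  have hD0 : (0:ℝ) < (t - t₀) ^ ((3:ℝ)/2) := Real.rpow_pos_of_pos hτ _
  have hD0' : (t - t₀) ^ ((3:ℝ)/2) ≠ 0 := ne_of_gt hD0
  have hhalf : (t - t₀) ^ ((3:ℝ)/2 - 1) = (t - t₀) ^ ((1:ℝ)/2) := by norm_num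
  have hsplit : (t - t₀) ^ ((3:ℝ)/2) = (t - t₀) * (t - t₀) ^ ((1:ℝ)/2) := by
    rw [show (3:ℝ)/2 = 1 + 1/2 by norm_num, Real.rpow_add hτ, Real.rpow_one]
  have ha0 : (t - t₀) ^ ((1:ℝ)/2) ≠ 0 := ne_of_gt (Real.rpow_pos_of_pos hτ _)
  have hDt2 : HasDerivAt (fun s => I₂ s x y u)
      (((x + x₀) * (t - t₀) ^ ((3:ℝ)/2)
        - ((t - t₀) * (x + x₀) - 2 * (y - y₀)) * ((3:ℝ)/2 * (t - t₀) ^ ((1:ℝ)/2)))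
        / ((t - t₀) ^ ((3:ℝ)/2)) ^ 2) t := by
    have hnum : HasDerivAt (fun s : ℝ => (s - t₀) * (x + x₀) - 2 * (y - y₀))
        (x + x₀) t := by
      simpa using (hid.mul_const (x + x₀)).sub_const (2 * (y - y₀))
    have hden : HasDerivAt (fun s : ℝ => (s - t₀) ^ ((3:ℝ)/2))
        ((3:ℝ)/2 * (t - t₀) ^ ((1:ℝ)/2)) t := by
      have := hid.rpow_const (p := (3:ℝ)/2) (Or.inl hτ0)
      simpa [hhalf] using this
    exact hnum.div hden hD0'
  have hDx2 : HasDerivAt (fun s => I₂ t s y u)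
      ((t - t₀) / (t - t₀) ^ ((3:ℝ)/2)) x := by
    have hnum : HasDerivAt (fun s : ℝ => (t - t₀) * (s + x₀) - 2 * (y - y₀))
        (t - t₀) x := by
      simpa using (((hasDerivAt_id x).add_const x₀).const_mul (t - t₀)).sub_const
        (2 * (y - y₀))
    exact hnum.div_const _
  have hDy2 : HasDerivAt (fun s => I₂ t x s u)
      (-2 / (t - t₀) ^ ((3:ℝ)/2)) y := by
    have hnum : HasDerivAt (fun s : ℝ => (t - t₀) * (x + x₀) - 2 * (s - y₀))
        (-2) y := by
      simpa using (hasDerivAt_const y ((t - t₀) * (x + x₀))).fun_sub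
        (((hasDerivAt_id y).sub_const y₀).const_mul 2)
    exact hnum.div_const _
  have hDu2 : deriv (fun s => I₂ t x y s) u = 0 := by
    simp [I₂]
  refine ⟨?_, ?_, ?_, ?_⟩
  · show 2 * (t - t₀) * _ + _ - _ - _ = 0
    rw [hDt1.deriv, hDx1.deriv, hDy1, hDu1.deriv]
    field_simp
    ring
  · show 2 * (t - t₀) * _ + _ - _ = 0
    rw [hDx1.deriv, hDy1, hDu1.deriv]
    field_simp
    ring
  · show 2 * (t - t₀) * _ + _ - _ - _ = 0
    rw [hDt2.deriv, hDx2.deriv, hDy2.deriv, hDu2]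
    rw [hsplit]
    field_simp
    ring
  · show 2 * (t - t₀) * _ + _ - _ = 0
    rw [hDx2.deriv, hDy2.deriv, hDu2]
    rw [hsplit]
    field_simp
    ring
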